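/- Let ψ be differentiable, β-absolutely homogeneous, convex, positive definite. For any w ∈ ℝ^d and any v with ‖v‖_ψ = ‖w‖_ψ, we have |⟨∇ψ(w), v⟩| ≤ ⟨∇ψ(w), w⟩ = β·ψ(w). -/

import Mathlib

open RealInnerProductSpace

section Aux

variable {d : ℕ}

/-- Gradient inequality for a convex function. -/
lemma grad_ineq_aux (ψ : EuclideanSpace ℝ (Fin d) → ℝ)
    (gψ : EuclideanSpace ℝ (Fin d) → EuclideanSpace ℝ (Fin d))
    (hψ : ∀ x, HasGradientAt ψ (gψ x) x)
    (hconv : ConvexOn ℝ Set.univ ψ)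
    (w y : EuclideanSpace ℝ (Fin d)) :
    ⟪gψ w, y - w⟫ ≤ ψ y - ψ w := by
  set φ : ℝ → ℝ := fun t => ψ (w + t • (y - w)) with hφ
  have hline : ∀ t : ℝ, HasDerivAt (fun s : ℝ => w + s • (y - w)) (y - w) t := by
    intro t
    simpa using ((hasDerivAt_id t).smul_const (y - w)).const_add w
  have hder : HasDerivAt φ ⟪gψ w, y - w⟫ 0 := by
    have h1 : HasFDerivAt ψ (InnerProductSpace.toDual ℝ _ (gψ w))
        (w + (0 : ℝ) • (y - w)) := by simpa using (hψ w).hasFDerivAt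
    have h2 := h1.comp_hasDerivAt (0 : ℝ) (hline 0)
    exact h2
  have hconvφ : ConvexOn ℝ Set.univ φ := by
    have := hconv.comp_affineMap
      (AffineMap.lineMap w y : ℝ →ᵃ[ℝ] EuclideanSpace ℝ (Fin d))
    have heq : φ = ψ ∘ (AffineMap.lineMap w y) := by
      funext t
      simp only [φ, Function.comp_apply, AffineMap.lineMap_apply, vsub_eq_sub, vadd_eq_add]
      rw [add_comm]
    rw [heq]
    simpa using this
  have hslope := hconvφ.le_slope_of_hasDerivAt (Set.mem_univ (0 : ℝ))
    (Set.mem_univ (1 : ℝ)) one_pos hder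
  have : slope φ 0 1 = ψ y - ψ w := by
    simp [slope, φ]
  linarith [hslope, this ▸ hslope]

/-- Euler's identity for β-homogeneous functions. -/
lemma euler_aux (ψ : EuclideanSpace ℝ (Fin d) → ℝ)
    (gψ : EuclideanSpace ℝ (Fin d) → EuclideanSpace ℝ (Fin d))
    (β : ℝ) (hβ : 1 < β)
    (hψ : ∀ x, HasGradientAt ψ (gψ x) x)
    (hhomog : ∀ (c : ℝ) x, ψ (c • x) = |c| ^ β * ψ x)
    (w : EuclideanSpace ℝ (Fin d)) :
    ⟪gψ w, w⟫ = β * ψ w := by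
  have hline : HasDerivAt (fun s : ℝ => s • w) w 1 := by
    simpa using (hasDerivAt_id (1 : ℝ)).smul_const w
  have hder1 : HasDerivAt (fun t : ℝ => ψ (t • w)) ⟪gψ w, w⟫ 1 := by
    have h1 : HasFDerivAt ψ (InnerProductSpace.toDual ℝ _ (gψ w)) w := hψ w
    have h1' : HasFDerivAt ψ (InnerProductSpace.toDual ℝ _ (gψ w)) ((1 : ℝ) • w) := by
      simpa using h1
    have h2 := h1'.comp_hasDerivAt (1 : ℝ) hline
    exact h2
  have hder2 : HasDerivAt (fun t : ℝ => ψ (t • w)) (β * ψ w) 1 := by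
    have hpow : HasDerivAt (fun t : ℝ => t ^ β * ψ w) (β * ψ w) 1 := by
      have := (Real.hasDerivAt_rpow_const (x := (1 : ℝ)) (p := β)
        (Or.inr hβ.le)).mul_const (ψ w)
      simpa using this
    have heq : (fun t : ℝ => ψ (t • w)) =ᶠ[nhds (1 : ℝ)] fun t : ℝ => t ^ β * ψ w := by
      filter_upwards [eventually_gt_nhds (show (0:ℝ) < 1 by norm_num)] with t ht
      rw [hhomog t w, abs_of_pos ht]
    exact hpow.congr_of_eventuallyEq heq
  exact hder1.unique hder2

/-- The homogeneous gauge recovers ψ^(1/β). -/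
lemma N_eq_aux (ψ : EuclideanSpace ℝ (Fin d) → ℝ)
    (β : ℝ) (hβ : 1 < β)
    (hnonneg : ∀ x, 0 ≤ ψ x)
    (hhomog : ∀ (c : ℝ) x, ψ (c • x) = |c| ^ β * ψ x)
    (w : EuclideanSpace ℝ (Fin d)) :
    sInf {c : ℝ | 0 < c ∧ ψ (c⁻¹ • w) ≤ 1} = ψ w ^ β⁻¹ := by
  have hβ0 : (0 : ℝ) < β := lt_trans one_pos hβ
  have hset : {c : ℝ | 0 < c ∧ ψ (c⁻¹ • w) ≤ 1}
      = {c : ℝ | 0 < c ∧ ψ w ^ β⁻¹ ≤ c} := by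
    ext c
    simp only [Set.mem_setOf_eq, and_congr_right_iff]
    intro hc
    rw [hhomog, abs_of_pos (inv_pos.mpr hc)]
    have hc0 : (0 : ℝ) < c ^ β := Real.rpow_pos_of_pos hc β
    rw [Real.inv_rpow hc.le]
    constructor
    · intro h
      have h1 : ψ w ≤ c ^ β := by
        rw [inv_mul_le_iff₀ hc0, mul_one] at h
        exact h
      calc ψ w ^ β⁻¹ ≤ (c ^ β) ^ β⁻¹ :=
            Real.rpow_le_rpow (hnonneg w) h1 (by positivity)
        _ = c := Real.rpow_rpow_inv hc.le hβ0.ne'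
    · intro h
      have h1 : ψ w ≤ c ^ β := by
        have := Real.rpow_le_rpow (Real.rpow_nonneg (hnonneg w) _) h hβ0.le
        rwa [Real.rpow_inv_rpow (hnonneg w) hβ0.ne'] at this
      rw [inv_mul_le_iff₀ hc0, mul_one]
      exact h1
  rw [hset]
  rcases eq_or_lt_of_le (Real.rpow_nonneg (hnonneg w) β⁻¹) with h0 | h0
  · have : {c : ℝ | 0 < c ∧ ψ w ^ β⁻¹ ≤ c} = Set.Ioi 0 := by
      ext c; simp [← h0]; intro hc; exact hc.le
    rw [this, ← h0]
    exact csInf_Ioi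
  · have : {c : ℝ | 0 < c ∧ ψ w ^ β⁻¹ ≤ c} = Set.Ici (ψ w ^ β⁻¹) := by
      ext c
      simp only [Set.mem_setOf_eq, Set.mem_Ici]
      exact ⟨fun h => h.2, fun h => ⟨lt_of_lt_of_le h0 h, h⟩⟩
    rw [this, csInf_Ici]

end Aux

/-- For a homogeneous convex potential, ∇ψ(w) is "parallel" to w:
|⟨∇ψ(w), v⟩| ≤ ⟨∇ψ(w), w⟩ = β·ψ(w) whenever ‖v‖_ψ = ‖w‖_ψ. -/
theorem grad_parallel {d : ℕ} (ψ : EuclideanSpace ℝ (Fin d) → ℝ)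
    (gψ : EuclideanSpace ℝ (Fin d) → EuclideanSpace ℝ (Fin d))
    (β : ℝ) (hβ : 1 < β)
    (hψ : ∀ x, HasGradientAt ψ (gψ x) x)
    (hconv : ConvexOn ℝ Set.univ ψ)
    (hnonneg : ∀ x, 0 ≤ ψ x)
    (hzero : ∀ x, ψ x = 0 ↔ x = 0)
    (hhomog : ∀ (c : ℝ) x, ψ (c • x) = |c| ^ β * ψ x)
    (N : EuclideanSpace ℝ (Fin d) → ℝ)
    (hN : ∀ w, N w = sInf {c : ℝ | 0 < c ∧ ψ (c⁻¹ • w) ≤ 1})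
    (w v : EuclideanSpace ℝ (Fin d)) (hv : N v = N w) :
    |⟪gψ w, v⟫| ≤ ⟪gψ w, w⟫ ∧ ⟪gψ w, w⟫ = β * ψ w := by
  have hβ0 : (0 : ℝ) < β := lt_trans one_pos hβ
  have heuler := euler_aux ψ gψ β hβ hψ hhomog w
  have hψeq : ψ v = ψ w := by
    have h1 : N v = ψ v ^ β⁻¹ := by rw [hN]; exact N_eq_aux ψ β hβ hnonneg hhomog v
    have h2 : N w = ψ w ^ β⁻¹ := by rw [hN]; exact N_eq_aux ψ β hβ hnonneg hhomog w
    have : ψ v ^ β⁻¹ = ψ w ^ β⁻¹ := by rw [← h1, ← h2, hv]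
    have := congrArg (fun x : ℝ => x ^ β) this
    simpa [Real.rpow_inv_rpow (hnonneg v) hβ0.ne',
      Real.rpow_inv_rpow (hnonneg w) hβ0.ne'] using this
  refine ⟨?_, heuler⟩
  have hpos := grad_ineq_aux ψ gψ hψ hconv w v
  have hneg := grad_ineq_aux ψ gψ hψ hconv w (-v)
  have hψneg : ψ (-v) = ψ v := by
    have := hhomog (-1) v
    simpa using this
  rw [inner_sub_right] at hpos hneg
  rw [abs_le]
  constructor
  · have : ⟪gψ w, -v⟫ = -⟪gψ w, v⟫ := inner_neg_right _ _
    rw [this] at hneg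
    linarith [hnonneg w, hψneg ▸ hψeq ▸ hneg]
  · linarith [hψeq ▸ hpos]
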